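/- Let A be a commutative ring and let ξ ∈ A be a nonzerodivisor such that A is ξ-adically separated, i.e., ⋂_{n ≥ 0} (ξ^n) = 0. Let b ∈ A be an element whose image in A/(ξ) is a nonzerodivisor. Then: (i) for every integer m ≥ 1, the image of ξ in A/(b^m) is a nonzerodivisor; and (ii) b is a nonzerodivisor in A. -/

import Mathlib

/-- Let `A` be a commutative ring and `ξ ∈ A` a nonzerodivisor such that `A` is
`ξ`-adically separated (`⋂ₙ (ξ^n) = 0`).  Let `b ∈ A` be an element whose image in
`A/(ξ)` is a nonzerodivisor.  Then (i) for every `m ≥ 1` the image of `ξ` in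
`A/(b^m)` is a nonzerodivisor, and (ii) `b` is a nonzerodivisor in `A`. -/
theorem nonzerodivisor_mod_pow_of_separated
    (A : Type*) [CommRing A] (ξ b : A)
    (hξ : ξ ∈ nonZeroDivisors A)
    (hsep : (⨅ n : ℕ, Ideal.span {ξ ^ n}) = (⊥ : Ideal A))
    (hb : Ideal.Quotient.mk (Ideal.span {ξ}) b ∈ nonZeroDivisors (A ⧸ Ideal.span {ξ})) :
    (∀ m : ℕ, 1 ≤ m →
      Ideal.Quotient.mk (Ideal.span {b ^ m}) ξ ∈ nonZeroDivisors (A ⧸ Ideal.span {b ^ m})) ∧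
    b ∈ nonZeroDivisors A := by
  constructor
  · intro m _
    rw [mem_nonZeroDivisors_iff_right]
    intro z hz
    obtain ⟨x, rfl⟩ := Ideal.Quotient.mk_surjective z
    rw [← map_mul, Ideal.Quotient.eq_zero_iff_mem, Ideal.mem_span_singleton] at hz
    obtain ⟨y, hy⟩ := hz
    -- x * ξ = b ^ m * y; reduce mod ξ
    have hy0 : Ideal.Quotient.mk (Ideal.span {ξ}) y = 0 := by
      have hbm : (Ideal.Quotient.mk (Ideal.span {ξ}) b) ^ m ∈
          nonZeroDivisors (A ⧸ Ideal.span {ξ}) := pow_mem hb m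
      apply hbm.2
      rw [← map_pow, mul_comm, ← map_mul, ← hy, map_mul,
        Ideal.Quotient.eq_zero_iff_mem.2 (Ideal.mem_span_singleton_self ξ), mul_zero]
    rw [Ideal.Quotient.eq_zero_iff_mem, Ideal.mem_span_singleton] at hy0
    obtain ⟨w, rfl⟩ := hy0
    -- cancel ξ : x = b ^ m * w
    have hx : x = b ^ m * w := by
      have h : (x - b ^ m * w) * ξ = 0 := by linear_combination hy
      exact sub_eq_zero.mp (hξ.2 _ h)
    rw [hx, Ideal.Quotient.eq_zero_iff_mem]
    exact Ideal.mem_span_singleton.2 ⟨w, rfl⟩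
  · rw [mem_nonZeroDivisors_iff_right]
    intro x hx
    have key : ∀ n : ℕ, ∃ y, x = ξ ^ n * y ∧ y * b = 0 := by
      intro n
      induction n with
      | zero => exact ⟨x, by simp, hx⟩
      | succ n ih =>
        obtain ⟨y, hxy, hyb⟩ := ih
        have hy0 : Ideal.Quotient.mk (Ideal.span {ξ}) y = 0 := by
          apply hb.2
          rw [← map_mul, hyb, map_zero]
        rw [Ideal.Quotient.eq_zero_iff_mem, Ideal.mem_span_singleton] at hy0
        obtain ⟨z, rfl⟩ := hy0
        refine ⟨z, by rw [hxy]; ring, ?_⟩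
        apply hξ.2
        linear_combination hyb
    have : x ∈ (⨅ n : ℕ, Ideal.span {ξ ^ n}) := by
      rw [Ideal.mem_iInf]
      intro n
      obtain ⟨y, hxy, _⟩ := key n
      exact Ideal.mem_span_singleton.2 ⟨y, hxy⟩
    rw [hsep] at this
    exact this
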